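/- Let m ≥ 3. If m is even, the distance matrix of the co-centralizer graph of D_{2m} (the star K_{1,m/2}) has eigenvalue −2 with multiplicity m/2 − 1 and eigenvalues (m/2 − 1) ± (1/2)√(m²−2m+4), each with multiplicity 1. If m is odd, the distance matrix of the co-centralizer graph of D_{2m} (the star K_{1,m}) has eigenvalue −2 with multiplicity m − 1 and eigenvalues (m−1) ± √(m²−m+1), each with multiplicity 1. -/

import Mathlib

open Polynomial

open Matrix in
section

/-- The star graph `K_{1,n}` on `n+1` vertices. -/
def starGraph (n : ℕ) : SimpleGraph (Fin 1 ⊕ Fin n) :=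
  completeBipartiteGraph (Fin 1) (Fin n)

/-- The distance matrix of a graph. -/
noncomputable def distMatrix {V : Type*} [Fintype V] (G : SimpleGraph V) : Matrix V V ℝ :=
  Matrix.of fun u v => (G.dist u v : ℝ)

lemma dist_center (n : ℕ) (a : Fin 1) (i : Fin n) : (starGraph n).dist (.inl a) (.inr i) = 1 := by
  rw [SimpleGraph.dist_eq_one_iff_adj]; simp [starGraph]

lemma dist_center' (n : ℕ) (a : Fin 1) (i : Fin n) : (starGraph n).dist (.inr i) (.inl a) = 1 := by
  rw [SimpleGraph.dist_eq_one_iff_adj]; simp [starGraph]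

lemma dist_leaves (n : ℕ) (i j : Fin n) (h : i ≠ j) :
    (starGraph n).dist (.inr i) (.inr j) = 2 := by
  let w : (starGraph n).Walk (.inr i) (.inr j) :=
    .cons (v := Sum.inl 0) (by simp [starGraph]) (.cons (by simp [starGraph]) .nil)
  have hle : (starGraph n).dist (.inr i) (.inr j) ≤ 2 := by
    exact (SimpleGraph.dist_le w).trans_eq rfl
  have h1 : (starGraph n).dist (.inr i) (.inr j) ≠ 1 := by
    simp only [ne_eq, SimpleGraph.dist_eq_one_iff_adj]
    simp [starGraph]
  have h0 : 0 < (starGraph n).dist (.inr i) (.inr j) :=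
    w.reachable.pos_dist_of_ne (by simp [h])
  omega

/-- the explicit distance matrix -/
lemma distMatrix_star (n : ℕ) : distMatrix (starGraph n) =
    Matrix.fromBlocks 0 (Matrix.of fun _ _ => 1) (Matrix.of fun _ _ => 1)
      (Matrix.of fun i j => if i = j then 0 else 2) := by
  ext u v
  cases u with
  | inl a => cases v with
    | inl b =>
        have : a = b := Subsingleton.elim a b
        subst this
        simp [distMatrix, fromBlocks]
    | inr j => simp [distMatrix, fromBlocks, dist_center]
  | inr i => cases v with
    | inl b => simp [distMatrix, fromBlocks, dist_center']
    | inr j =>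
        by_cases h : i = j
        · subst h; simp [distMatrix, fromBlocks]
        · simp [distMatrix, fromBlocks, dist_leaves n i j h, h]

lemma eval_charpoly {ι : Type*} [Fintype ι] [DecidableEq ι] (M : Matrix ι ι ℝ) (x : ℝ) :
    M.charpoly.eval x = (Matrix.diagonal (fun _ => x) - M).det := by
  rw [Matrix.charpoly, ← Polynomial.coe_evalRingHom, RingHom.map_det]
  congr 1
  ext i j
  by_cases h : i = j <;>
    simp [Matrix.charmatrix_apply, Matrix.diagonal, h, RingHom.mapMatrix_apply]

lemma star_det (n : ℕ) (hn : 1 ≤ n) (x : ℝ) (hx : x ≠ 0) (hx2 : x + 2 ≠ 0) :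
    (Matrix.diagonal (fun _ => x) -
      Matrix.fromBlocks (0 : Matrix (Fin 1) (Fin 1) ℝ) (Matrix.of fun _ _ => 1)
        (Matrix.of fun _ _ => 1) (Matrix.of fun i j : Fin n => if i = j then 0 else 2)).det
    = (x + 2) ^ (n - 1) * (x ^ 2 - 2 * ((n : ℝ) - 1) * x - n) := by
  set c : ℝ := (-2 - x⁻¹) / (x + 2) with hc
  have hsplit : (Matrix.diagonal (fun _ => x) -
      Matrix.fromBlocks (0 : Matrix (Fin 1) (Fin 1) ℝ) (Matrix.of fun _ _ => 1)
        (Matrix.of fun _ _ => 1) (Matrix.of fun i j : Fin n => if i = j then 0 else 2)) =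
      Matrix.fromBlocks (Matrix.of fun _ _ => x) (Matrix.of fun _ _ => (-1 : ℝ))
        (Matrix.of fun _ _ => (-1 : ℝ)) (Matrix.of fun i j : Fin n => if i = j then x else -2) := by
    ext u v
    cases u with
    | inl a => cases v with
      | inl b =>
          have : a = b := Subsingleton.elim a b
          subst this; simp [fromBlocks]
      | inr j => simp [fromBlocks]
    | inr i => cases v with
      | inl b => simp [fromBlocks]
      | inr j => by_cases h : i = j <;> simp [fromBlocks, Matrix.diagonal, h]
  rw [hsplit]
  letI : Invertible (Matrix.of fun _ _ => x : Matrix (Fin 1) (Fin 1) ℝ) :=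
    ⟨Matrix.of fun _ _ => x⁻¹,
     by ext i j; fin_cases i; fin_cases j;
        simp [Matrix.mul_apply, inv_mul_cancel₀ hx],
     by ext i j; fin_cases i; fin_cases j;
        simp [Matrix.mul_apply, mul_inv_cancel₀ hx]⟩
  rw [Matrix.det_fromBlocks₁₁]
  have hdetA : (Matrix.of fun _ _ => x : Matrix (Fin 1) (Fin 1) ℝ).det = x := by
    simp [Matrix.det_fin_one]
  have hCB : (Matrix.of fun _ _ => (-1 : ℝ) : Matrix (Fin n) (Fin 1) ℝ) *
      ⅟(Matrix.of fun _ _ => x : Matrix (Fin 1) (Fin 1) ℝ) *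
      (Matrix.of fun _ _ => (-1 : ℝ) : Matrix (Fin 1) (Fin n) ℝ) =
      Matrix.of fun _ _ => x⁻¹ := by
    have hinv : ⅟(Matrix.of fun _ _ => x : Matrix (Fin 1) (Fin 1) ℝ) =
        Matrix.of fun _ _ => x⁻¹ := rfl
    rw [hinv]
    ext i j
    simp [Matrix.mul_apply]
  rw [hCB]
  have hschur : (Matrix.of fun i j : Fin n => if i = j then x else -2) -
      (Matrix.of fun _ _ => x⁻¹) =
      (x + 2) • (1 + Matrix.replicateCol (Fin 1) (fun _ : Fin n => c) * Matrix.replicateRow (Fin 1) (fun _ : Fin n => (1:ℝ))) := by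
    ext i j
    by_cases h : i = j
    · subst h
      simp only [Matrix.sub_apply, Matrix.of_apply, if_pos rfl, Matrix.smul_apply,
        Matrix.add_apply, Matrix.one_apply_eq, Matrix.mul_apply, Finset.univ_unique,
        Finset.sum_singleton, Matrix.replicateCol_apply, Matrix.replicateRow_apply, smul_eq_mul, mul_one]
      rw [hc]
      field_simp
      rw [if_pos trivial]
      ring
    · simp only [Matrix.sub_apply, Matrix.of_apply, if_neg h, Matrix.smul_apply,
        Matrix.add_apply, Matrix.one_apply_ne h, Matrix.mul_apply, Finset.univ_unique,
        Finset.sum_singleton, Matrix.replicateCol_apply, Matrix.replicateRow_apply, smul_eq_mul, mul_one,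
        zero_add]
      rw [hc]
      field_simp
  rw [hschur, Matrix.det_smul]
  erw [Matrix.det_one_add_replicateCol_mul_replicateRow]
  rw [hdetA]
  have hdot : (fun _ : Fin n => (1:ℝ)) ⬝ᵥ (fun _ : Fin n => c) = n * c := by
    simp [dotProduct]
  rw [hdot]
  have hpow : (x + 2) ^ n = (x + 2) ^ (n - 1) * (x + 2) := by
    rw [← pow_succ]; congr 1; omega
  rw [Fintype.card_fin] at *
  rw [hpow, hc]
  field_simp
  ring
lemma star_charpoly (n : ℕ) (hn : 1 ≤ n) :
    (distMatrix (starGraph n)).charpoly =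
      (X + C 2) ^ (n - 1) * (X ^ 2 - C (2 * ((n : ℝ) - 1)) * X - C (n : ℝ)) := by
  set p := (distMatrix (starGraph n)).charpoly
  set q := (X + C 2) ^ (n - 1) * (X ^ 2 - C (2 * ((n : ℝ) - 1)) * X - C ((n : ℝ)) : ℝ[X]) with hq
  have h : {x : ℝ | x ≠ 0 ∧ x ≠ -2} ⊆ {x | (p - q).IsRoot x} := by
    rintro x ⟨hx0, hx2⟩
    have hx2' : x + 2 ≠ 0 := by intro hc; apply hx2; linarith
    have hev : p.eval x = (x + 2) ^ (n - 1) * (x ^ 2 - 2 * ((n : ℝ) - 1) * x - n) := by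
      rw [_root_.eval_charpoly, distMatrix_star]
      exact star_det n hn x hx0 hx2'
    have hevq : q.eval x = (x + 2) ^ (n - 1) * (x ^ 2 - 2 * ((n : ℝ) - 1) * x - n) := by
      simp [hq]
    simp only [Set.mem_setOf_eq, Polynomial.IsRoot, Polynomial.eval_sub, hev, hevq, sub_self]
  have hinf : ({x : ℝ | x ≠ 0 ∧ x ≠ -2}).Infinite := by
    have hfin : ({0, -2} : Set ℝ).Finite := by
      exact (Set.finite_singleton (-2)).insert 0
    have hset : {x : ℝ | x ≠ 0 ∧ x ≠ -2} = ({0, -2} : Set ℝ)ᶜ := by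
      ext x
      simp only [Set.mem_compl_iff, Set.mem_insert_iff, Set.mem_singleton_iff,
        Set.mem_setOf_eq, not_or]
    rw [hset]
    exact hfin.infinite_compl
  exact sub_eq_zero.mp (Polynomial.eq_zero_of_infinite_isRoot (p - q) (hinf.mono h))

lemma star_mults (n : ℕ) (hn : 2 ≤ n) :
    (distMatrix (starGraph n)).charpoly.rootMultiplicity (-2) = n - 1 ∧
    (distMatrix (starGraph n)).charpoly.rootMultiplicity
      (((n : ℝ) - 1) + Real.sqrt ((n : ℝ) ^ 2 - n + 1)) = 1 ∧
    (distMatrix (starGraph n)).charpoly.rootMultiplicity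
      (((n : ℝ) - 1) - Real.sqrt ((n : ℝ) ^ 2 - n + 1)) = 1 := by
  have hn1 : (1:ℝ) ≤ (n:ℝ) := by exact_mod_cast Nat.one_le_of_lt hn
  have hn2 : (2:ℝ) ≤ (n:ℝ) := by exact_mod_cast hn
  set s := Real.sqrt ((n : ℝ) ^ 2 - n + 1) with hs
  have harg : (0:ℝ) ≤ (n:ℝ)^2 - n + 1 := by nlinarith
  have hs2 : s ^ 2 = (n:ℝ)^2 - n + 1 := Real.sq_sqrt harg
  have hspos : 0 < s := Real.sqrt_pos.mpr (by nlinarith)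
  set rp := ((n : ℝ) - 1) + s with hrp
  set rm := ((n : ℝ) - 1) - s with hrm
  have hquad : (X ^ 2 - C (2 * ((n : ℝ) - 1)) * X - C ((n : ℝ)) : ℝ[X]) =
      (X - C rp) * (X - C rm) := by
    have h1 : rp + rm = 2 * ((n:ℝ) - 1) := by rw [hrp, hrm]; ring
    have h2 : rp * rm = -(n:ℝ) := by
      rw [hrp, hrm]
      nlinarith [hs2]
    calc (X ^ 2 - C (2 * ((n : ℝ) - 1)) * X - C ((n : ℝ)) : ℝ[X])
        = X ^ 2 - (C (rp + rm)) * X + C (rp * rm) := by rw [h1, h2, map_neg]; ring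
      _ = X ^ 2 - (C rp + C rm) * X + C rp * C rm := by rw [C_add, C_mul]
      _ = (X - C rp) * (X - C rm) := by ring
  have hfac : (distMatrix (starGraph n)).charpoly =
      (X - C (-2 : ℝ)) ^ (n - 1) * ((X - C rp) * (X - C rm)) := by
    rw [star_charpoly n (by omega), hquad]
    congr 1
    congr 1
    rw [map_neg, sub_neg_eq_add]
  -- distinctness
  have hrp2 : rp ≠ -2 := by intro h; rw [hrp] at h; linarith
  have hrm2 : rm ≠ -2 := by
    intro h
    rw [hrm] at h
    have hs' : s = (n:ℝ) + 1 := by linarith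
    rw [hs'] at hs2
    nlinarith [hs2]
  have hrpm : rp ≠ rm := by intro h; rw [hrp, hrm] at h; linarith
  have hne1 : ((X - C (-2 : ℝ)) ^ (n - 1) : ℝ[X]) ≠ 0 := pow_ne_zero _ (X_sub_C_ne_zero _)
  have hne2 : ((X - C rp) * (X - C rm) : ℝ[X]) ≠ 0 :=
    mul_ne_zero (X_sub_C_ne_zero _) (X_sub_C_ne_zero _)
  have key : ∀ a : ℝ, (distMatrix (starGraph n)).charpoly.rootMultiplicity a =
      (if a = -2 then n - 1 else 0) + ((if a = rp then 1 else 0) + (if a = rm then 1 else 0)) := by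
    intro a
    rw [hfac, Polynomial.rootMultiplicity_mul (mul_ne_zero hne1 hne2),
      Polynomial.rootMultiplicity_mul hne2, Polynomial.rootMultiplicity_X_sub_C,
      Polynomial.rootMultiplicity_X_sub_C]
    congr 1
    by_cases h : a = -2
    · subst h; rw [if_pos rfl, Polynomial.rootMultiplicity_X_sub_C_pow]
    · rw [if_neg h, Polynomial.rootMultiplicity_eq_zero]
      simp only [Polynomial.IsRoot, Polynomial.eval_pow, Polynomial.eval_sub,
        Polynomial.eval_X, Polynomial.eval_C]
      intro hc
      have := pow_eq_zero_iff (by omega : n - 1 ≠ 0) |>.mp hc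
      exact h (by linarith [sub_eq_zero.mp this])
  refine ⟨?_, ?_, ?_⟩
  · rw [key (-2), if_pos rfl, if_neg (Ne.symm hrp2), if_neg (Ne.symm hrm2)]; omega
  · rw [key rp, if_neg hrp2, if_pos rfl, if_neg hrpm]
  · rw [key rm, if_neg hrm2, if_neg (Ne.symm hrpm), if_pos rfl]

theorem dihedral_cocentralizer_distance_spectrum (m : ℕ) (hm : 3 ≤ m) :
    (Even m →
      (distMatrix (starGraph (m / 2))).charpoly.rootMultiplicity (-2) = m / 2 - 1 ∧
      (distMatrix (starGraph (m / 2))).charpoly.rootMultiplicity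
        (((m : ℝ) / 2 - 1) + (1 / 2) * Real.sqrt ((m : ℝ) ^ 2 - 2 * m + 4)) = 1 ∧
      (distMatrix (starGraph (m / 2))).charpoly.rootMultiplicity
        (((m : ℝ) / 2 - 1) - (1 / 2) * Real.sqrt ((m : ℝ) ^ 2 - 2 * m + 4)) = 1) ∧
    (Odd m →
      (distMatrix (starGraph m)).charpoly.rootMultiplicity (-2) = m - 1 ∧
      (distMatrix (starGraph m)).charpoly.rootMultiplicity
        (((m : ℝ) - 1) + Real.sqrt ((m : ℝ) ^ 2 - m + 1)) = 1 ∧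
      (distMatrix (starGraph m)).charpoly.rootMultiplicity
        (((m : ℝ) - 1) - Real.sqrt ((m : ℝ) ^ 2 - m + 1)) = 1) := by
  constructor
  · intro hme
    obtain ⟨k, hk⟩ := hme
    have hk2 : m / 2 = k := by omega
    have hk' : (m : ℝ) = 2 * k := by rw [hk]; push_cast; ring
    have hkge : 2 ≤ k := by omega
    obtain ⟨h1, h2, h3⟩ := star_mults k hkge
    have hsqrt : Real.sqrt ((m:ℝ)^2 - 2*m + 4) = 2 * Real.sqrt ((k:ℝ)^2 - k + 1) := by
      rw [hk']
      rw [show (2*(k:ℝ))^2 - 2*(2*(k:ℝ)) + 4 = 2^2 * ((k:ℝ)^2 - k + 1) by ring,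
        Real.sqrt_mul (by positivity), Real.sqrt_sq (by norm_num)]
    have hvp : ((m:ℝ)/2 - 1) + (1/2) * Real.sqrt ((m:ℝ)^2 - 2*m + 4) =
        ((k:ℝ) - 1) + Real.sqrt ((k:ℝ)^2 - k + 1) := by
      rw [hsqrt, hk']; ring
    have hvm : ((m:ℝ)/2 - 1) - (1/2) * Real.sqrt ((m:ℝ)^2 - 2*m + 4) =
        ((k:ℝ) - 1) - Real.sqrt ((k:ℝ)^2 - k + 1) := by
      rw [hsqrt, hk']; ring
    rw [hk2, hvp, hvm]
    exact ⟨h1, h2, h3⟩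
  · intro _
    exact star_mults m (by omega)
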